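/- There is no surjective bi-p-morphism from any finite comb C_n onto the co-tree F₃ consisting of a top element a with three pairwise incomparable minimal immediate predecessors b, c, d. -/

import Mathlib

/-- The `n`-comb: `⟨i, true⟩` is the spine point `xᵢ₊₁`, while `⟨i, false⟩` is the
tooth `xᵢ₊₁'`, a minimal immediate predecessor of `xᵢ₊₁`. -/
structure Comb (n : ℕ) where
  idx : Fin n
  spine : Bool

instance {n : ℕ} : PartialOrder (Comb n) where
  le u v := u = v ∨ (u.idx ≤ v.idx ∧ v.spine = true)
  le_refl u := Or.inl rfl
  le_trans u v w huv hvw := by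
    rcases huv with rfl | ⟨h1, h2⟩
    · exact hvw
    · rcases hvw with rfl | ⟨h3, h4⟩
      · exact Or.inr ⟨h1, h2⟩
      · exact Or.inr ⟨le_trans h1 h3, h4⟩
  le_antisymm u v huv hvu := by
    rcases huv with rfl | ⟨h1, h2⟩
    · rfl
    · rcases hvu with h | ⟨h3, h4⟩
      · exact h.symm
      · obtain ⟨i, b⟩ := u
        obtain ⟨j, c⟩ := v
        have hij : i = j := le_antisymm h1 h3
        have hb : b = true := h4
        have hc : c = true := h2
        subst hij; subst hb; subst hc
        rfl


/-- The co-tree `F₃`: a top element `a` with three pairwise incomparable minimal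
immediate predecessors `b`, `c`, `d`. -/
inductive F3 where
  | a | b | c | d
deriving DecidableEq

instance : Fintype F3 where
  elems := {.a, .b, .c, .d}
  complete x := by cases x <;> decide

def F3.leb : F3 → F3 → Bool
  | _, .a => true
  | x, y => decide (x = y)

instance : PartialOrder F3 where
  le x y := F3.leb x y = true
  le_refl u := by
    show F3.leb u u = true
    cases u <;> decide
  le_trans u v w := by
    show F3.leb u v = true → F3.leb v w = true → F3.leb u w = true
    cases u <;> cases v <;> cases w <;> decide
  le_antisymm u v := by
    show F3.leb u v = true → F3.leb v u = true → u = v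
    cases u <;> cases v <;> decide


lemma F3.le_a (x : F3) : x ≤ F3.a := rfl

lemma F3.le_cases {x y : F3} (h : x ≤ y) : y = F3.a ∨ x = y := by
  have h' : F3.leb x y = true := h
  cases x <;> cases y <;> revert h' <;> decide

/-- There is no surjective bi-p-morphism from any finite comb `C_n` onto `F₃`. -/
theorem no_surjective_biPMorphism_comb_to_F3 (n : ℕ) (hn : 0 < n) :
    ¬ ∃ f : Comb n → F3,
        Monotone f ∧
        (∀ (x : Comb n) (y : F3), f x ≤ y → ∃ z, x ≤ z ∧ f z = y) ∧
        (∀ (x : Comb n) (y : F3), y ≤ f x → ∃ z, z ≤ x ∧ f z = y) ∧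
        Function.Surjective f := by
  rintro ⟨f, hmono, hup, hdown, hsurj⟩
  have hle_top : ∀ u : Comb n, u ≤ (⟨⟨n-1, by omega⟩, true⟩ : Comb n) := by
    intro u
    refine Or.inr ⟨?_, rfl⟩
    have := u.idx.isLt
    have := u.idx.isLt
    rw [Fin.le_def]
    show u.idx.val ≤ n - 1
    omega
  have htopa : f ⟨⟨n-1, by omega⟩, true⟩ = F3.a := by
    obtain ⟨u, hu⟩ := hsurj F3.a
    have h1 := hmono (hle_top u)
    rw [hu] at h1
    exact (le_antisymm h1 (F3.le_a _)).symm
  have hex : ∃ i, ∃ h : i < n, f ⟨⟨i, h⟩, true⟩ = F3.a := ⟨n-1, by omega, htopa⟩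
  obtain ⟨hjn, hja⟩ := Nat.find_spec hex
  set j := Nat.find hex with hjdef
  have hmin : ∀ i (h : i < n), i < j → f ⟨⟨i, h⟩, true⟩ ≠ F3.a := by
    intro i h hij ha
    exact Nat.find_min hex hij ⟨h, ha⟩
  set t := f ⟨⟨j, hjn⟩, false⟩ with htdef
  set m := f ⟨⟨0, hn⟩, true⟩ with hmdef
  have claim : ∀ u : Comb n, u ≤ ⟨⟨j, hjn⟩, true⟩ →
      f u = m ∨ f u = F3.a ∨ f u = t := by
    rintro ⟨⟨i, hi⟩, s⟩ hu
    have hij : i ≤ j := by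
      rcases hu with h | ⟨h1, _⟩
      · cases h; exact le_refl _
      · exact Fin.mk_le_mk.mp h1
    rcases Nat.lt_or_ge i j with hlt | hge
    · have h0j : (0 : ℕ) < j := Nat.lt_of_le_of_lt (Nat.zero_le i) hlt
      have hs : f ⟨⟨i, hi⟩, true⟩ = m := by
        have h0 : (⟨⟨0, hn⟩, true⟩ : Comb n) ≤ ⟨⟨i, hi⟩, true⟩ :=
          Or.inr ⟨Fin.mk_le_mk.mpr (Nat.zero_le i), rfl⟩
        rcases F3.le_cases (hmono h0) with h | h
        · exact absurd h (hmin i hi hlt)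
        · exact h.symm
      have hmne : m ≠ F3.a := hmin 0 hn h0j
      cases s
      · have hts : (⟨⟨i, hi⟩, false⟩ : Comb n) ≤ ⟨⟨i, hi⟩, true⟩ :=
          Or.inr ⟨le_refl _, rfl⟩
        have hle := hmono hts
        rw [hs] at hle
        rcases F3.le_cases hle with h | h
        · exact absurd h hmne
        · exact Or.inl h
      · exact Or.inl hs
    · have hij' : i = j := le_antisymm hij hge
      subst hij'
      cases s
      · exact Or.inr (Or.inr rfl)
      · exact Or.inr (Or.inl hja)
  have key : ∀ y : F3, y = m ∨ y = F3.a ∨ y = t := by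
    intro y
    obtain ⟨z, hz, hfz⟩ := hdown ⟨⟨j, hjn⟩, true⟩ y (by rw [hja]; exact F3.le_a y)
    rw [← hfz]
    exact claim z hz
  have Hb := key F3.b
  have Hc := key F3.c
  have Hd := key F3.d
  rcases Hb with hb | hb | hb
  · rcases Hc with hc | hc | hc
    · exact absurd (hb.trans hc.symm) (by decide)
    · exact absurd hc (by decide)
    · rcases Hd with hd | hd | hd
      · exact absurd (hb.trans hd.symm) (by decide)
      · exact absurd hd (by decide)
      · exact absurd (hc.trans hd.symm) (by decide)
  · exact absurd hb (by decide)
  · rcases Hc with hc | hc | hc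
    · rcases Hd with hd | hd | hd
      · exact absurd (hc.trans hd.symm) (by decide)
      · exact absurd hd (by decide)
      · exact absurd (hb.trans hd.symm) (by decide)
    · exact absurd hc (by decide)
    · exact absurd (hb.trans hc.symm) (by decide)
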